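/- Let λ be a Young diagram with n boxes and ℓ with 1 ≤ ℓ ≤ λ₁. Then the number of excited diagrams of the row [ℓ] in λ is at most e^{5√n}. -/

import Mathlib

open scoped Classical

/-- Number of standard Young tableaux of an arbitrary finite set of boxes
(rows and columns indexed by `ℕ`): bijective fillings with `1,…,|s|` that are
(weakly, hence strictly) increasing along rows and columns. -/
noncomputable def sytCount (s : Finset (ℕ × ℕ)) : ℕ :=
  Nat.card {f : {p // p ∈ s} ≃ Fin s.card //
    ∀ p q : {p // p ∈ s}, (p : ℕ × ℕ).1 ≤ (q : ℕ × ℕ).1 → (p : ℕ × ℕ).2 ≤ (q : ℕ × ℕ).2 →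
      (f p : ℕ) ≤ (f q : ℕ)}

/-- Hook length of a box `u` in the Young diagram `μ`. -/
noncomputable def hookLen (μ : YoungDiagram) (u : ℕ × ℕ) : ℕ :=
  (μ.cells.filter (fun v => (v.1 = u.1 ∧ u.2 ≤ v.2) ∨ (u.1 ≤ v.1 ∧ v.2 = u.2))).card

/-- One excitation step: a free box of `E` moves diagonally by `(1,1)` inside `μ`. -/
def ExcitedStep (μ : YoungDiagram) (E F : Finset (ℕ × ℕ)) : Prop :=
  ∃ u ∈ E, (u.1 + 1, u.2 + 1) ∈ μ ∧ (u.1 + 1, u.2) ∉ E ∧ (u.1, u.2 + 1) ∉ E ∧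
    (u.1 + 1, u.2 + 1) ∉ E ∧ F = insert (u.1 + 1, u.2 + 1) (E.erase u)

/-- The set of excited diagrams of `E` in `μ`. -/
noncomputable def excitedSet (μ : YoungDiagram) (E : Finset (ℕ × ℕ)) :
    Finset (Finset (ℕ × ℕ)) :=
  μ.cells.powerset.filter (fun F => Relation.ReflTransGen (ExcitedStep μ) E F)

/-- The excited sum `S(μ, E)`. -/
noncomputable def excitedSum (μ : YoungDiagram) (E : Finset (ℕ × ℕ)) : ℕ :=
  ∑ F ∈ excitedSet μ E, ∏ u ∈ F, hookLen μ u

/-- The row diagram `[ℓ]`: the first `ℓ` boxes of the first row. -/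
def rowSeg (ℓ : ℕ) : Finset (ℕ × ℕ) := (Finset.range ℓ).image (fun j => ((0 : ℕ), j))

/-- Diagonal length of a Young diagram. -/
def diagLen (μ : YoungDiagram) : ℕ :=
  ((Finset.range μ.card).filter (fun i => (i, i) ∈ μ)).card

/-- Structure of excited diagrams of a row: they are graphs of a weakly increasing
displacement function. -/
lemma excited_row_struct (lam : YoungDiagram) (ℓ : ℕ) (h : ℓ ≤ lam.rowLen 0)
    {F : Finset (ℕ × ℕ)} (hF : Relation.ReflTransGen (ExcitedStep lam) (rowSeg ℓ) F) :
    ∃ d : ℕ → ℕ, (∀ j k, j ≤ k → k < ℓ → d j ≤ d k) ∧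
      (∀ j < ℓ, ((d j : ℕ), j + d j) ∈ lam) ∧
      F = (Finset.range ℓ).image (fun j => (d j, j + d j)) := by
  induction hF with
  | refl =>
    refine ⟨fun _ => 0, fun _ _ _ _ => le_rfl, fun j hj => ?_, ?_⟩
    · have : ((0 : ℕ), j) ∈ lam := by
        rw [YoungDiagram.mem_iff_lt_rowLen]; omega
      simpa using this
    · simp [rowSeg]
  | tail _ hstep ih =>
    obtain ⟨d, hmono, hmem, hE⟩ := ih
    obtain ⟨u, huE, hμ, hb, hr, hnd, hFeq⟩ := hstep
    rw [hE] at huE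
    simp only [Finset.mem_image, Finset.mem_range] at huE
    obtain ⟨j0, hj0, hu⟩ := huE
    subst hu
    set d' : ℕ → ℕ := fun j => if j = j0 then d j0 + 1 else d j with hd'
    have hkey : ∀ k, j0 < k → k < ℓ → d j0 + 1 ≤ d k := by
      intro k hk hkℓ
      have h1 : d (j0 + 1) ≤ d k := hmono _ _ hk hkℓ
      have h2 : d j0 ≤ d (j0 + 1) := hmono _ _ (Nat.le_succ _) (by omega)
      have hne : d j0 ≠ d (j0 + 1) := by
        intro heq
        apply hr
        rw [hE]
        simp only [Finset.mem_image, Finset.mem_range]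
        exact ⟨j0 + 1, by omega, by simp [← heq]; omega⟩
      omega
    refine ⟨d', ?_, ?_, ?_⟩
    · intro j k hjk hkℓ
      rcases eq_or_ne j j0 with rfl | hj
      · rcases eq_or_ne k j with rfl | hk
        · exact le_rfl
        · simp only [hd', if_pos rfl, if_neg hk]
          exact hkey k (by omega) hkℓ
      · rcases eq_or_ne k j0 with rfl | hk
        · simp only [hd', if_pos rfl, if_neg hj]
          exact le_trans (hmono _ _ hjk hkℓ) (Nat.le_succ _)
        · simp only [hd', if_neg hj, if_neg hk]
          exact hmono _ _ hjk hkℓ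
    · intro j hj
      rcases eq_or_ne j j0 with rfl | hne
      · simpa [hd', Nat.add_assoc] using hμ
      · simp only [hd', if_neg hne]
        exact hmem j hj
    · rw [hFeq, hE]
      ext x
      simp only [Finset.mem_insert, Finset.mem_erase, Finset.mem_image, Finset.mem_range]
      constructor
      · rintro (rfl | ⟨hne, j, hj, rfl⟩)
        · exact ⟨j0, hj0, by simp [hd', Prod.ext_iff]; omega⟩
        · have hjj : j ≠ j0 := by rintro rfl; exact hne rfl
          exact ⟨j, hj, by simp [hd', hjj]⟩
      · rintro ⟨j, hj, rfl⟩
        rcases eq_or_ne j j0 with rfl | hjj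
        · left; simp [hd', Prod.ext_iff]; omega
        · right
          refine ⟨?_, j, hj, by simp [hd', hjj]⟩
          intro hx
          rw [Prod.mk.injEq] at hx
          omega

/-- Lower bound `k^k ≤ k! e^k` for the factorial. -/
lemma pow_self_le_factorial_mul_exp (k : ℕ) :
    (k : ℝ) ^ k ≤ (Nat.factorial k : ℝ) * Real.exp 1 ^ k := by
  induction k with
  | zero => simp
  | succ k ih =>
    have hstep : ((k : ℝ) + 1) ^ k ≤ Real.exp 1 * (k : ℝ) ^ k := by
      rcases Nat.eq_zero_or_pos k with rfl | hk
      · simpa using Real.one_le_exp (by norm_num)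
      · have hk0 : (0 : ℝ) < k := by exact_mod_cast hk
        have h1 : (k : ℝ) + 1 ≤ (k : ℝ) * Real.exp (1 / k) := by
          have := Real.add_one_le_exp (1 / (k : ℝ))
          calc (k : ℝ) + 1 = (k : ℝ) * (1 / k + 1) := by field_simp; ring
            _ ≤ (k : ℝ) * Real.exp (1 / k) := by
                exact mul_le_mul_of_nonneg_left this (le_of_lt hk0)
        calc ((k : ℝ) + 1) ^ k ≤ ((k : ℝ) * Real.exp (1 / k)) ^ k := by
              exact pow_le_pow_left₀ (by positivity) h1 k
          _ = (k : ℝ) ^ k * Real.exp (1 / k) ^ k := by rw [mul_pow]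
          _ = (k : ℝ) ^ k * Real.exp 1 := by
              rw [← Real.exp_nat_mul]
              congr 1
              field_simp
          _ = Real.exp 1 * (k : ℝ) ^ k := by ring
    have hkn : (0 : ℝ) ≤ (k : ℝ) + 1 := by positivity
    calc ((k + 1 : ℕ) : ℝ) ^ (k + 1) = ((k : ℝ) + 1) * ((k : ℝ) + 1) ^ k := by
          push_cast; ring
      _ ≤ ((k : ℝ) + 1) * (Real.exp 1 * (k : ℝ) ^ k) :=
          mul_le_mul_of_nonneg_left hstep hkn
      _ ≤ ((k : ℝ) + 1) * (Real.exp 1 * ((Nat.factorial k : ℝ) * Real.exp 1 ^ k)) := by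
          have he : (0 : ℝ) ≤ Real.exp 1 := (Real.exp_pos 1).le
          exact mul_le_mul_of_nonneg_left (mul_le_mul_of_nonneg_left ih he) hkn
      _ = (Nat.factorial (k + 1) : ℝ) * Real.exp 1 ^ (k + 1) := by
          rw [Nat.factorial_succ]; push_cast; ring

/-- `x ≤ exp (x / e)` for all real `x`. -/
lemma le_exp_div_e (x : ℝ) : x ≤ Real.exp (x / Real.exp 1) := by
  have h := Real.add_one_le_exp (x / Real.exp 1 - 1)
  have he : (0 : ℝ) < Real.exp 1 := Real.exp_pos 1
  have : x / Real.exp 1 ≤ Real.exp (x / Real.exp 1 - 1) := by linarith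
  calc x = (x / Real.exp 1) * Real.exp 1 := by field_simp
    _ ≤ Real.exp (x / Real.exp 1 - 1) * Real.exp 1 :=
        mul_le_mul_of_nonneg_right this he.le
    _ = Real.exp (x / Real.exp 1) := by rw [← Real.exp_add]; ring_nf

/-- Core real estimate: `C(p,k) ≤ e^{5√n}` when `pk ≤ 4n` and `k² ≤ 2n`. -/
lemma choose_le_exp_core (p k n : ℕ) (hk1 : 1 ≤ k)
    (hpk : p * k ≤ 4 * n) (hkk : k * k ≤ 2 * n) :
    ((p.choose k : ℝ)) ≤ Real.exp (5 * Real.sqrt n) := by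
  have hK1 : (1 : ℝ) ≤ (k : ℝ) := by exact_mod_cast hk1
  have hK0 : (0 : ℝ) < (k : ℝ) := by linarith
  have hN0 : (0 : ℝ) ≤ (n : ℝ) := by positivity
  have hR0 : (0 : ℝ) ≤ Real.sqrt (n : ℝ) := Real.sqrt_nonneg _
  have hRN : Real.sqrt (n : ℝ) ^ 2 = (n : ℝ) := Real.sq_sqrt hN0
  have hPK : (p : ℝ) * (k : ℝ) ≤ 4 * (n : ℝ) := by exact_mod_cast hpk
  have hKK : (k : ℝ) * (k : ℝ) ≤ 2 * (n : ℝ) := by exact_mod_cast hkk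
  have hP0 : (0 : ℝ) ≤ (p : ℝ) := by positivity
  have he : (0 : ℝ) < Real.exp 1 := Real.exp_pos 1
  set R : ℝ := Real.sqrt (n : ℝ) with hR
  -- binomial bound
  have step1 : ((p.choose k : ℕ) : ℝ) ≤ (p : ℝ) ^ k / (Nat.factorial k : ℝ) := by
    exact_mod_cast (Nat.choose_le_pow_div (α := ℝ) k p)
  have hfac : (k : ℝ) ^ k / Real.exp 1 ^ k ≤ (Nat.factorial k : ℝ) := by
    rw [div_le_iff₀ (by positivity)]
    exact pow_self_le_factorial_mul_exp k
  have step2 : (p : ℝ) ^ k / (Nat.factorial k : ℝ) ≤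
      ((p : ℝ) * Real.exp 1 / (k : ℝ)) ^ k := by
    have h2 : (0 : ℝ) < (k : ℝ) ^ k / Real.exp 1 ^ k := by positivity
    calc (p : ℝ) ^ k / (Nat.factorial k : ℝ)
        ≤ (p : ℝ) ^ k / ((k : ℝ) ^ k / Real.exp 1 ^ k) :=
          div_le_div_of_nonneg_left (by positivity) h2 hfac
      _ = ((p : ℝ) * Real.exp 1 / (k : ℝ)) ^ k := by
          rw [div_pow, mul_pow, div_div_eq_mul_div]
  -- bound the base
  have hbase : (p : ℝ) * Real.exp 1 / (k : ℝ) ≤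
      Real.exp (1 + 4 * R / (Real.exp 1 * (k : ℝ))) := by
    have hs : (2 * R / (k : ℝ)) ^ 2 ≤
        Real.exp (2 * (2 * R / (k : ℝ)) / Real.exp 1) := by
      have h1 : (2 * R / (k : ℝ)) ≤ Real.exp ((2 * R / (k : ℝ)) / Real.exp 1) :=
        le_exp_div_e _
      have h2 : (0 : ℝ) ≤ 2 * R / (k : ℝ) := by positivity
      calc (2 * R / (k : ℝ)) ^ 2
          ≤ Real.exp ((2 * R / (k : ℝ)) / Real.exp 1) ^ 2 := by
            exact pow_le_pow_left₀ h2 h1 2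
        _ = Real.exp ((2 : ℕ) * ((2 * R / (k : ℝ)) / Real.exp 1)) := by
            rw [Real.exp_nat_mul]
        _ = Real.exp (2 * (2 * R / (k : ℝ)) / Real.exp 1) := by
            norm_num
            ring_nf
    have hsq : (2 * R / (k : ℝ)) ^ 2 = 4 * (n : ℝ) / ((k : ℝ) * (k : ℝ)) := by
      rw [div_pow]
      rw [show (2 * R) ^ 2 = 4 * R ^ 2 by ring, hRN]
      congr 1
      ring
    have harg : 2 * (2 * R / (k : ℝ)) / Real.exp 1 = 4 * R / (Real.exp 1 * (k : ℝ)) := by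
      field_simp
      ring
    have h4 : 4 * (n : ℝ) / ((k : ℝ) * (k : ℝ)) ≤
        Real.exp (4 * R / (Real.exp 1 * (k : ℝ))) := by
      rw [← harg, ← hsq]; exact hs
    have hPle : (p : ℝ) / (k : ℝ) ≤ 4 * (n : ℝ) / ((k : ℝ) * (k : ℝ)) := by
      rw [div_le_div_iff₀ hK0 (by positivity)]
      calc (p : ℝ) * ((k : ℝ) * (k : ℝ)) = ((p : ℝ) * (k : ℝ)) * (k : ℝ) := by ring
        _ ≤ (4 * (n : ℝ)) * (k : ℝ) := mul_le_mul_of_nonneg_right hPK hK0.le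
    calc (p : ℝ) * Real.exp 1 / (k : ℝ) = Real.exp 1 * ((p : ℝ) / (k : ℝ)) := by ring
      _ ≤ Real.exp 1 * Real.exp (4 * R / (Real.exp 1 * (k : ℝ))) :=
          mul_le_mul_of_nonneg_left (hPle.trans h4) he.le
      _ = Real.exp (1 + 4 * R / (Real.exp 1 * (k : ℝ))) := by rw [← Real.exp_add]
  have step3 : ((p : ℝ) * Real.exp 1 / (k : ℝ)) ^ k ≤
      Real.exp ((k : ℝ) + 4 * R / Real.exp 1) := by
    calc ((p : ℝ) * Real.exp 1 / (k : ℝ)) ^ k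
        ≤ Real.exp (1 + 4 * R / (Real.exp 1 * (k : ℝ))) ^ k := by
          exact pow_le_pow_left₀ (by positivity) hbase k
      _ = Real.exp ((k : ℝ) * (1 + 4 * R / (Real.exp 1 * (k : ℝ)))) := by
          rw [Real.exp_nat_mul]
      _ = Real.exp ((k : ℝ) + 4 * R / Real.exp 1) := by
          congr 1
          field_simp
  -- final: K + 4R/e ≤ 5R
  have hKR : (k : ℝ) ≤ 1.5 * R := by
    have h2N : (k : ℝ) ≤ Real.sqrt (2 * (n : ℝ)) := by
      rw [show (k : ℝ) = Real.sqrt ((k : ℝ) ^ 2) from (Real.sqrt_sq hK0.le).symm]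
      exact Real.sqrt_le_sqrt (by nlinarith)
    have hmul : Real.sqrt (2 * (n : ℝ)) = Real.sqrt 2 * R :=
      Real.sqrt_mul (by norm_num) (n : ℝ)
    have hs2 : Real.sqrt 2 ≤ 1.5 := by
      rw [show (1.5 : ℝ) = Real.sqrt (1.5 ^ 2) from (Real.sqrt_sq (by norm_num)).symm]
      exact Real.sqrt_le_sqrt (by norm_num)
    calc (k : ℝ) ≤ Real.sqrt 2 * R := by rw [← hmul]; exact h2N
      _ ≤ 1.5 * R := mul_le_mul_of_nonneg_right hs2 hR0
  have heR : 4 * R / Real.exp 1 ≤ 1.5 * R := by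
    have h27 : (2.7 : ℝ) ≤ Real.exp 1 := by
      have := Real.exp_one_gt_d9
      linarith
    rw [div_le_iff₀ he]
    nlinarith
  have hfin : (k : ℝ) + 4 * R / Real.exp 1 ≤ 5 * R := by nlinarith
  exact le_trans step1 (step2.trans (step3.trans (Real.exp_le_exp.2 hfin)))

/-- The key numeric estimate: `C(ℓ+2M, ℓ) ≤ e^{5√n}` when `ℓM ≤ n`, `1 ≤ ℓ`, `1 ≤ M`. -/
lemma choose_le_exp_bound (n ℓ M : ℕ) (hl : 1 ≤ ℓ) (hM : 1 ≤ M) (hlM : ℓ * M ≤ n) :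
    (((ℓ + 2 * M).choose ℓ : ℝ)) ≤ Real.exp (5 * Real.sqrt n) := by
  obtain ⟨k, hk⟩ : ∃ k, k = min ℓ (2 * M) := ⟨_, rfl⟩
  have hk1 : 1 ≤ k := by
    rw [hk]; refine le_min hl ?_; omega
  have hchoose : (ℓ + 2 * M).choose ℓ = (ℓ + 2 * M).choose k := by
    rcases le_total ℓ (2 * M) with hc | hc
    · rw [hk, min_eq_left hc]
    · have hsymm := Nat.choose_symm (Nat.le_add_right ℓ (2 * M))
      rw [show ℓ + 2 * M - ℓ = 2 * M by omega] at hsymm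
      rw [hk, min_eq_right hc, ← hsymm]
  have hpk : (ℓ + 2 * M) * k ≤ 4 * n := by
    rcases le_total ℓ (2 * M) with hc | hc
    · rw [hk, min_eq_left hc]; nlinarith
    · rw [hk, min_eq_right hc]; nlinarith
  have hkk : k * k ≤ 2 * n := by
    have h1 : k * k ≤ ℓ * (2 * M) := by
      rw [hk]; exact Nat.mul_le_mul (min_le_left _ _) (min_le_right _ _)
    nlinarith
  rw [hchoose]
  exact choose_le_exp_core (ℓ + 2 * M) k n hk1 hpk hkk

/-- For `1 ≤ ℓ ≤ λ₁`, the number of excited diagrams of the row `[ℓ]` in `λ`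
is at most `e^{5√n}`, where `n = |λ|`. -/
theorem excitedSet_row_card_le_exp (lam : YoungDiagram) (ℓ : ℕ)
    (h1 : 1 ≤ ℓ) (h : ℓ ≤ lam.rowLen 0) :
    ((excitedSet lam (rowSeg ℓ)).card : ℝ) ≤ Real.exp (5 * Real.sqrt lam.card) := by
  classical
  set n := lam.card with hn
  set M := n / ℓ with hM
  have hln : ℓ ≤ n := by
    refine le_trans h ?_
    rw [YoungDiagram.rowLen_eq_card]
    exact Finset.card_le_card (fun x hx => by
      rw [YoungDiagram.mem_row_iff] at hx
      exact hx.1)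
  have hM1 : 1 ≤ M := by
    rw [hM]
    exact (Nat.le_div_iff_mul_le (by omega)).2 (by omega)
  have hlM : ℓ * M ≤ n := by
    rw [hM, Nat.mul_comm]
    exact Nat.div_mul_le_self n ℓ
  -- structure of members of the excited set, with the bound d j < M
  have key : ∀ F ∈ excitedSet lam (rowSeg ℓ), ∃ d : ℕ → ℕ,
      (∀ j k, j ≤ k → k < ℓ → d j ≤ d k) ∧
      F = (Finset.range ℓ).image (fun j => (d j, j + d j)) ∧
      (∀ j < ℓ, d j < M) := by
    intro F hF
    rw [excitedSet, Finset.mem_filter] at hF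
    obtain ⟨d, hmono, hmem, hrepr⟩ := excited_row_struct lam ℓ h hF.2
    refine ⟨d, hmono, hrepr, ?_⟩
    have hD : ((d (ℓ - 1) + 1) * ℓ) ≤ n := by
      have hsub : (Finset.range (d (ℓ - 1) + 1)) ×ˢ (Finset.range ℓ) ⊆ lam.cells := by
        rintro ⟨i, j⟩ hij
        rw [Finset.mem_product, Finset.mem_range, Finset.mem_range] at hij
        rw [YoungDiagram.mem_cells]
        exact lam.up_left_mem (by omega) (by omega : j ≤ (ℓ - 1) + d (ℓ - 1))
          (hmem (ℓ - 1) (by omega))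
      have := Finset.card_le_card hsub
      simpa [Finset.card_product, hn] using this
    have hD2 : d (ℓ - 1) + 1 ≤ M := by
      rw [hM]
      exact (Nat.le_div_iff_mul_le (by omega)).2 hD
    intro j hj
    have := hmono j (ℓ - 1) (by omega) (by omega)
    omega
  -- injection into ℓ-subsets of range (ℓ + 2M)
  have hinj : (excitedSet lam (rowSeg ℓ)).card ≤
      ((Finset.range (ℓ + 2 * M)).powersetCard ℓ).card := by
    refine Finset.card_le_card_of_injOn
      (fun F => F.image (fun c : ℕ × ℕ => c.1 + c.2)) ?_ ?_
    · intro F hF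
      obtain ⟨d, hmono, hrepr, hbd⟩ := key F hF
      dsimp only
      rw [Finset.mem_coe, Finset.mem_powersetCard]
      have himg : F.image (fun c : ℕ × ℕ => c.1 + c.2) =
          (Finset.range ℓ).image (fun j => d j + (j + d j)) := by
        rw [hrepr, Finset.image_image]
        rfl
      constructor
      · rw [himg]
        intro x hx
        simp only [Finset.mem_image, Finset.mem_range] at hx ⊢
        obtain ⟨j, hj, rfl⟩ := hx
        have := hbd j hj
        omega
      · rw [himg]
        rw [Finset.card_image_of_injOn, Finset.card_range]
        intro a ha b hb heq
        simp only [Finset.coe_range, Set.mem_Iio] at ha hb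
        dsimp only at heq
        rcases lt_trichotomy a b with hab | hab | hab
        · have := hmono a b (le_of_lt hab) hb; omega
        · exact hab
        · have := hmono b a (le_of_lt hab) ha; omega
    · intro F1 hF1 F2 hF2 heq
      rw [Finset.mem_coe] at hF1 hF2
      dsimp only at heq
      obtain ⟨d1, hmono1, hrepr1, hbd1⟩ := key F1 hF1
      obtain ⟨d2, hmono2, hrepr2, hbd2⟩ := key F2 hF2
      have himg1 : F1.image (fun c : ℕ × ℕ => c.1 + c.2) =
          (Finset.range ℓ).image (fun j => d1 j + (j + d1 j)) := by
        rw [hrepr1, Finset.image_image]; rfl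
      have himg2 : F1.image (fun c : ℕ × ℕ => c.1 + c.2) =
          (Finset.range ℓ).image (fun j => d2 j + (j + d2 j)) := by
        rw [heq, hrepr2, Finset.image_image]; rfl
      have hScard : (F1.image (fun c : ℕ × ℕ => c.1 + c.2)).card = ℓ := by
        rw [himg1, Finset.card_image_of_injOn, Finset.card_range]
        intro a ha b hb heq'
        simp only [Finset.coe_range, Set.mem_Iio] at ha hb
        dsimp only at heq'
        rcases lt_trichotomy a b with hab | hab | hab
        · have := hmono1 a b (le_of_lt hab) hb; omega
        · exact hab
        · have := hmono1 b a (le_of_lt hab) ha; omega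
      have hsm1 : StrictMono (fun j : Fin ℓ => d1 (j : ℕ) + ((j : ℕ) + d1 (j : ℕ))) := by
        intro a b hab
        have hab' : (a : ℕ) < (b : ℕ) := hab
        have := hmono1 a b (le_of_lt hab') b.isLt
        simp only
        omega
      have hsm2 : StrictMono (fun j : Fin ℓ => d2 (j : ℕ) + ((j : ℕ) + d2 (j : ℕ))) := by
        intro a b hab
        have hab' : (a : ℕ) < (b : ℕ) := hab
        have := hmono2 a b (le_of_lt hab') b.isLt
        simp only
        omega
      have hin1 : ∀ x : Fin ℓ, d1 (x : ℕ) + ((x : ℕ) + d1 (x : ℕ)) ∈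
          F1.image (fun c : ℕ × ℕ => c.1 + c.2) := by
        intro x
        rw [himg1]
        exact Finset.mem_image_of_mem _ (Finset.mem_range.2 x.isLt)
      have hin2 : ∀ x : Fin ℓ, d2 (x : ℕ) + ((x : ℕ) + d2 (x : ℕ)) ∈
          F1.image (fun c : ℕ × ℕ => c.1 + c.2) := by
        intro x
        rw [himg2]
        exact Finset.mem_image_of_mem _ (Finset.mem_range.2 x.isLt)
      have he1 := Finset.orderEmbOfFin_unique hScard hin1 hsm1
      have he2 := Finset.orderEmbOfFin_unique hScard hin2 hsm2
      have hdd : ∀ j < ℓ, d1 j = d2 j := by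
        intro j hj
        have h12 := congrFun (he1.trans he2.symm) ⟨j, hj⟩
        simp only [Fin.val_mk] at h12
        omega
      rw [hrepr1, hrepr2]
      apply Finset.image_congr
      intro j hj
      rw [Finset.mem_coe, Finset.mem_range] at hj
      simp only
      rw [hdd j hj]
  have hcount : (excitedSet lam (rowSeg ℓ)).card ≤ (ℓ + 2 * M).choose ℓ := by
    refine le_trans hinj ?_
    rw [Finset.card_powersetCard, Finset.card_range]
  calc ((excitedSet lam (rowSeg ℓ)).card : ℝ) ≤ (((ℓ + 2 * M).choose ℓ : ℕ) : ℝ) := by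
        exact_mod_cast hcount
    _ ≤ Real.exp (5 * Real.sqrt n) := choose_le_exp_bound n ℓ M h1 hM1 hlM
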